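/- Let μ be a finite nonnegative Borel measure on ℝ whose support is contained in a compact set, with μ([−r,r]) > 0 for every r > 0. Then for every δ ≥ 0, the sign uncertainty constant 𝔼(μ;δ) := inf{ r(F) : F ≠ 0 real entire of exponential type ≤ δ, F ∈ L¹(ℝ,μ), ∫F dμ ≤ 0, F eventually nonnegative on ℝ } equals 0. -/

import Mathlib

set_option maxHeartbeats 4000000


open MeasureTheory

/-- `F` has exponential type at most `δ`. -/
def ExpTypeLE (F : ℂ → ℂ) (δ : ℝ) : Prop :=
  ∀ ε > (0 : ℝ), ∃ C : ℝ, ∀ z : ℂ,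
    ‖F z‖ ≤ C * Real.exp ((δ + ε) * ‖z‖)

/-- The radius `r(f) = inf { r > 0 : f(x) ≥ 0 for |x| ≥ r }` of the last sign change. -/
noncomputable def lastSignChange (f : ℝ → ℝ) : ℝ :=
  sInf {r : ℝ | 0 < r ∧ ∀ x : ℝ, r ≤ |x| → 0 ≤ f x}

lemma poly_le_exp (t : ℝ) (ht : 0 < t) (m : ℕ) :
    ∃ C : ℝ, ∀ u : ℝ, 0 ≤ u → (1 + u) ^ m ≤ C * Real.exp (t * u) := by
  refine ⟨2 ^ m * (1 + m.factorial / t ^ m), fun u hu => ?_⟩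
  have h1 : (1 : ℝ) ≤ Real.exp (t * u) := by
    rw [← Real.exp_zero]; exact Real.exp_le_exp.2 (by positivity)
  have h2 : u ^ m ≤ m.factorial / t ^ m * Real.exp (t * u) := by
    have := Real.pow_div_factorial_le_exp (t*u) (by positivity) m
    rw [mul_pow] at this
    rw [div_mul_eq_mul_div, le_div_iff₀ (by positivity)]
    rw [div_le_iff₀ (by positivity : (0:ℝ) < (m.factorial:ℝ))] at this
    nlinarith [this]
  have h3 : (1 + u) ^ m ≤ 2 ^ m * (1 + u ^ m) := by
    calc (1 + u) ^ m ≤ (2 * max 1 u) ^ m := by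
          gcongr
          rcases le_total u 1 with h | h
          · simp [max_eq_left h]; linarith
          · simp [max_eq_right h]; linarith
      _ = 2 ^ m * (max 1 u) ^ m := mul_pow _ _ _
      _ ≤ 2 ^ m * (1 + u ^ m) := by
          gcongr 2 ^ m * ?_
          rcases le_total u 1 with h | h
          · rw [max_eq_left h]; simp; positivity
          · rw [max_eq_right h]; nlinarith [pow_nonneg hu m]
  calc (1 + u) ^ m ≤ 2 ^ m * (1 + u ^ m) := h3
    _ ≤ 2 ^ m * (Real.exp (t*u) + m.factorial / t ^ m * Real.exp (t * u)) := by gcongr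
    _ = 2 ^ m * (1 + m.factorial / t ^ m) * Real.exp (t * u) := by ring

lemma key (μ : Measure ℝ) [IsFiniteMeasure μ]
    (hsupp : ∃ R : ℝ, μ {x : ℝ | R < |x|} = 0)
    (hmass : ∀ r > (0 : ℝ), 0 < μ (Set.Icc (-r) r))
    (δ : ℝ) (hδ : 0 ≤ δ) (ε : ℝ) (hε : 0 < ε) :
    ∃ F : ℂ → ℂ, Differentiable ℂ F ∧ F ≠ 0 ∧ ExpTypeLE F δ ∧
      (∀ x : ℝ, (F x).im = 0) ∧
      Integrable (fun x : ℝ => (F x).re) μ ∧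
      (∫ x, (F x).re ∂μ) ≤ 0 ∧
      (∃ R : ℝ, ∀ x : ℝ, R ≤ |x| → 0 ≤ (F x).re) ∧
      lastSignChange (fun x : ℝ => (F x).re) ≤ ε := by
  obtain ⟨R₀, hR₀⟩ := hsupp
  set R : ℝ := max R₀ 1 with hRdef
  have hR1 : (1 : ℝ) ≤ R := le_max_right _ _
  have hR0 : (0 : ℝ) < R := lt_of_lt_of_le one_pos hR1
  have hnull : μ {x : ℝ | R < |x|} = 0 := by
    refine measure_mono_null (fun x hx => ?_) hR₀
    simp only [Set.mem_setOf_eq] at hx ⊢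
    exact lt_of_le_of_lt (le_max_left _ _) hx
  set a : ℝ := min ε 1 with hadef
  have ha0 : 0 < a := lt_min hε one_pos
  have ha1 : a ≤ 1 := min_le_right _ _
  have haε : a ≤ ε := min_le_left _ _
  set A : ℝ := 1 + R^2 - a^2/4 with hAdef
  set B : ℝ := 1 + R^2 - a^2 with hBdef
  have hB0 : 0 < B := by rw [hBdef]; nlinarith
  have hA0 : 0 < A := by rw [hAdef]; nlinarith
  have hBA : B < A := by rw [hAdef, hBdef]; nlinarith
  set c : ℝ := (μ (Set.Icc (-(a/2)) (a/2))).toReal with hcdef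
  have hc : 0 < c := ENNReal.toReal_pos (hmass (a/2) (by positivity)).ne' (measure_ne_top μ _)
  set M : ℝ := (μ Set.univ).toReal with hMdef
  have hcM : c ≤ M := ENNReal.toReal_mono (measure_ne_top μ _) (measure_mono (Set.subset_univ _))
  have hM : 0 < M := lt_of_lt_of_le hc hcM
  -- choose n even with R^2 * B^n * M ≤ 3*a^2/4 * A^n * c
  have hK : (0:ℝ) < 3*a^2*c/(4*R^2*M) := by positivity
  obtain ⟨n₀, hn₀⟩ := exists_pow_lt_of_lt_one hK (by rw [div_lt_one hA0]; exact hBA)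
  set n : ℕ := 2 * n₀ with hndef
  have hneven : Even n := ⟨n₀, by omega⟩
  have hqn : (B/A) ^ n ≤ (B/A) ^ n₀ :=
    pow_le_pow_of_le_one (by positivity) (by rw [div_le_one hA0]; exact hBA.le) (by omega)
  have hkey : R^2 * B^n * M ≤ 3*a^2/4 * A^n * c := by
    have h1 : (B/A)^n < 3*a^2*c/(4*R^2*M) := lt_of_le_of_lt hqn hn₀
    rw [div_pow, div_lt_div_iff₀ (by positivity) (by positivity)] at h1
    nlinarith [h1]
  -- the function
  set f : ℝ → ℝ := fun x => (x^2 - a^2) * (1 + R^2 - x^2)^n with hfdef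
  set F : ℂ → ℂ := fun z => (z^2 - (a:ℂ)^2) * (1 + (R:ℂ)^2 - z^2)^n with hFdef
  have hFre : ∀ x : ℝ, F (x : ℂ) = ((f x : ℝ) : ℂ) := by
    intro x
    simp only [hFdef, hfdef]
    push_cast
    ring
  have hre : (fun x : ℝ => (F x).re) = f := by
    funext x; rw [hFre]; simp
  have hfcont : Continuous f := by fun_prop
  -- eventual nonnegativity and sign change radius
  have hnonneg : ∀ x : ℝ, a ≤ |x| → 0 ≤ f x := by
    intro x hx
    have hx2 : a^2 ≤ x^2 := by nlinarith [sq_abs x, abs_nonneg x]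
    have hw : (0:ℝ) ≤ (1 + R^2 - x^2)^n := hneven.pow_nonneg _
    have : 0 ≤ x^2 - a^2 := by linarith
    exact mul_nonneg this hw
  -- integrability
  obtain ⟨x₀, _, hx₀'⟩ := (isCompact_Icc (a := -R) (b := R)).exists_isMaxOn
    ⟨-R, Set.left_mem_Icc.2 (by linarith)⟩ (hfcont.abs.continuousOn)
  have hx₀ : ∀ x ∈ Set.Icc (-R) R, |f x| ≤ |f x₀| := fun x hx => hx₀' hx
  have hint : Integrable f μ := by
    refine Integrable.mono' (integrable_const (|f x₀|)) hfcont.aestronglyMeasurable ?_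
    rw [Filter.eventually_iff, mem_ae_iff]
    refine measure_mono_null (fun x hx => ?_) hnull
    simp only [Set.mem_compl_iff, Set.mem_setOf_eq, not_le] at hx ⊢
    by_contra hcon
    push_neg at hcon
    rw [Real.norm_eq_abs] at hx
    exact absurd (hx₀ x (Set.mem_Icc.2 (abs_le.1 hcon))) (not_le.2 hx)
  -- integral estimate
  have hIle : (∫ x, f x ∂μ) ≤ 0 := by
    have hSmeas : MeasurableSet (Set.Icc (-(a/2)) (a/2)) := measurableSet_Icc
    have hsplit := integral_add_compl hSmeas hint
    have I1 : (∫ x in Set.Icc (-(a/2)) (a/2), f x ∂μ) ≤ (-(3*a^2/4) * A^n) * c := by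
      have := setIntegral_const (μ := μ) (s := Set.Icc (-(a/2)) (a/2)) (-(3*a^2/4) * A^n)
      rw [smul_eq_mul] at this
      calc (∫ x in Set.Icc (-(a/2)) (a/2), f x ∂μ)
          ≤ (∫ _ in Set.Icc (-(a/2)) (a/2), (-(3*a^2/4) * A^n) ∂μ) := by
            refine setIntegral_mono_on hint.integrableOn (integrableOn_const (measure_ne_top μ _)) hSmeas ?_
            intro x hx
            obtain ⟨hx1, hx2⟩ := Set.mem_Icc.1 hx
            have hxsq : x^2 ≤ a^2/4 := by nlinarith
            have hwA : A^n ≤ (1 + R^2 - x^2)^n := pow_le_pow_left₀ hA0.le (by rw [hAdef]; nlinarith) n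
            have h1 : (x^2 - a^2) * (1 + R^2 - x^2)^n ≤ (x^2 - a^2) * A^n :=
              mul_le_mul_of_nonpos_left hwA (by nlinarith)
            have h2 : (x^2 - a^2) * A^n ≤ (-(3*a^2/4)) * A^n :=
              mul_le_mul_of_nonneg_right (by nlinarith) (pow_nonneg hA0.le n)
            calc f x = (x^2 - a^2) * (1 + R^2 - x^2)^n := rfl
              _ ≤ (x^2 - a^2) * A^n := h1
              _ ≤ (-(3*a^2/4)) * A^n := h2
        _ = (-(3*a^2/4) * A^n) * c := by rw [this]; unfold Measure.real; rw [← hcdef]; ring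
    have hbnd : ∀ x : ℝ, |x| ≤ R → f x ≤ R^2 * B^n := by
      intro x hcon
      have hxR : x^2 ≤ R^2 := by nlinarith [sq_abs x, abs_nonneg x]
      rcases le_or_gt (a^2) (x^2) with h | h
      · have hwB : (1 + R^2 - x^2)^n ≤ B^n :=
          pow_le_pow_left₀ (by nlinarith) (by rw [hBdef]; nlinarith) n
        exact mul_le_mul (by nlinarith) hwB (pow_nonneg (by nlinarith) n) (by positivity)
      · have h1 : f x ≤ 0 :=
          mul_nonpos_of_nonpos_of_nonneg (by nlinarith) (pow_nonneg (by nlinarith) n)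
        have h2 : (0:ℝ) ≤ R^2 * B^n := mul_nonneg (by positivity) (pow_nonneg hB0.le n)
        linarith
    have hae : ∀ᵐ x ∂μ, f x ≤ R^2 * B^n := by
      rw [Filter.eventually_iff, mem_ae_iff]
      refine measure_mono_null (fun x hx => ?_) hnull
      simp only [Set.mem_compl_iff, Set.mem_setOf_eq, not_le] at hx ⊢
      by_contra hcon
      push_neg at hcon
      exact absurd (hbnd x hcon) (not_le.2 hx)
    have I2 : (∫ x in (Set.Icc (-(a/2)) (a/2))ᶜ, f x ∂μ) ≤ R^2 * B^n * M := by
      calc (∫ x in (Set.Icc (-(a/2)) (a/2))ᶜ, f x ∂μ)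
          ≤ (∫ _ in (Set.Icc (-(a/2)) (a/2))ᶜ, (R^2 * B^n) ∂μ) := by
            refine setIntegral_mono_ae hint.integrableOn
              (integrableOn_const (measure_ne_top μ _)) hae
        _ = (μ (Set.Icc (-(a/2)) (a/2))ᶜ).toReal * (R^2 * B^n) := by
            rw [setIntegral_const, smul_eq_mul]; rfl
        _ ≤ M * (R^2 * B^n) := by
            have h1 : (μ (Set.Icc (-(a/2)) (a/2))ᶜ).toReal ≤ M := by
              rw [hMdef]
              exact ENNReal.toReal_mono (measure_ne_top μ _) (measure_mono (Set.subset_univ _))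
            have h2 : (0:ℝ) ≤ R^2 * B^n := mul_nonneg (by positivity) (pow_nonneg hB0.le n)
            exact mul_le_mul_of_nonneg_right h1 h2
        _ = R^2 * B^n * M := by ring
    have : (∫ x, f x ∂μ) ≤ (-(3*a^2/4) * A^n) * c + R^2 * B^n * M := by
      rw [← hsplit]; exact add_le_add I1 I2
    nlinarith [this]
  -- assemble
  refine ⟨F, ?_, ?_, ?_, ?_, ?_, ?_, ?_, ?_⟩
  · fun_prop
  · intro h
    have h0 := congrFun h ((0:ℝ) : ℂ)
    rw [hFre 0] at h0
    have hf0 : f 0 < 0 := by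
      have h1 : (0:ℝ) < (1 + R^2 - (0:ℝ)^2)^n := by
        have : (0:ℝ) < 1 + R^2 - (0:ℝ)^2 := by nlinarith
        exact pow_pos this n
      have h2 := mul_pos (pow_pos ha0 2) h1
      simp only [hfdef]
      nlinarith [h1, h2]
    simp only [Pi.zero_apply, Complex.ofReal_eq_zero] at h0
    exact absurd h0 hf0.ne
  · -- exponential type
    intro ε' hε'
    have ht : 0 < δ + ε' := by linarith
    obtain ⟨C, hC⟩ := poly_le_exp (δ + ε') ht (2 * (n + 1))
    set K : ℝ := 1 + R^2 + a^2 with hKdef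
    have hK1 : (1:ℝ) ≤ K := by rw [hKdef]; nlinarith
    refine ⟨K^(n+1) * C, fun z => ?_⟩
    set u : ℝ := ‖z‖ with hudef
    have hu0 : 0 ≤ u := norm_nonneg z
    have hb1 : ‖z^2 - (a:ℂ)^2‖ ≤ K * (1+u)^2 := by
      calc ‖z^2 - (a:ℂ)^2‖ ≤ ‖z^2‖ + ‖(a:ℂ)^2‖ :=
            (norm_sub_le _ _)
        _ = u^2 + a^2 := by rw [norm_pow, norm_pow, Complex.norm_real, Real.norm_eq_abs, sq_abs]
        _ ≤ K * (1+u)^2 := by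
            rw [hKdef]
            nlinarith [hu0, sq_nonneg u, sq_nonneg R, sq_nonneg a, mul_nonneg hu0 (sq_nonneg R),
              mul_nonneg hu0 (sq_nonneg a), mul_nonneg (sq_nonneg u) (sq_nonneg R),
              mul_nonneg (sq_nonneg u) (sq_nonneg a)]
    have hb2 : ‖1 + (R:ℂ)^2 - z^2‖ ≤ K * (1+u)^2 := by
      calc ‖1 + (R:ℂ)^2 - z^2‖ ≤ ‖1 + (R:ℂ)^2‖ + ‖z^2‖ :=
            (norm_sub_le _ _)
        _ ≤ (1 + R^2) + u^2 := by
            rw [norm_pow]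
            gcongr
            calc ‖1 + (R:ℂ)^2‖ ≤ ‖(1:ℂ)‖ + ‖(R:ℂ)^2‖ :=
                  norm_add_le _ _
              _ = 1 + R^2 := by rw [norm_one, norm_pow, Complex.norm_real, Real.norm_eq_abs, sq_abs]
        _ ≤ K * (1+u)^2 := by
            rw [hKdef]
            nlinarith [hu0, sq_nonneg u, sq_nonneg R, sq_nonneg a, mul_nonneg hu0 (sq_nonneg R),
              mul_nonneg hu0 (sq_nonneg a), mul_nonneg (sq_nonneg u) (sq_nonneg R),
              mul_nonneg (sq_nonneg u) (sq_nonneg a)]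
    have hK0 : (0:ℝ) ≤ K := by linarith
    have hKu0 : (0:ℝ) ≤ K * (1+u)^2 := mul_nonneg hK0 (by positivity)
    have hFb : ‖F z‖ ≤ K^(n+1) * (1+u)^(2*(n+1)) := by
      calc ‖F z‖
          = ‖z^2 - (a:ℂ)^2‖ * (‖1 + (R:ℂ)^2 - z^2‖)^n := by
            simp only [hFdef]; rw [norm_mul, norm_pow]
        _ ≤ (K * (1+u)^2) * (K * (1+u)^2)^n :=
            mul_le_mul hb1 (pow_le_pow_left₀ (norm_nonneg _) hb2 n)
              (pow_nonneg (norm_nonneg _) n) hKu0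
        _ = K^(n+1) * ((1+u)^2)^(n+1) := by rw [mul_pow]; ring
        _ = K^(n+1) * (1+u)^(2*(n+1)) := by rw [← pow_mul]
    calc ‖F z‖ ≤ K^(n+1) * (1+u)^(2*(n+1)) := hFb
      _ ≤ K^(n+1) * (C * Real.exp ((δ + ε') * u)) :=
          mul_le_mul_of_nonneg_left (hC u hu0) (pow_nonneg hK0 (n+1))
      _ = K^(n+1) * C * Real.exp ((δ + ε') * u) := by ring
  · intro x; rw [hFre]; simp
  · rw [hre]; exact hint
  · rw [hre]; exact hIle
  · exact ⟨a, fun x hx => by rw [hFre x, Complex.ofReal_re]; exact hnonneg x hx⟩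
  · rw [hre]
    calc lastSignChange f ≤ a := csInf_le ⟨0, fun r hr => hr.1.le⟩ ⟨ha0, hnonneg⟩
      _ ≤ ε := haε

lemma lastSignChange_nonneg (f : ℝ → ℝ) : 0 ≤ lastSignChange f :=
  Real.sInf_nonneg fun r hr => hr.1.le

/-- if `μ` is a finite nonnegative Borel measure with compactly contained
support charging every interval `[−r, r]`, then for every `δ ≥ 0` the sign uncertainty
constant `𝔼(μ; δ)` vanishes. -/
theorem sign_uncertainty_constant_vanishes (μ : Measure ℝ) [IsFiniteMeasure μ]
    (hsupp : ∃ R : ℝ, μ {x : ℝ | R < |x|} = 0)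
    (hmass : ∀ r > (0 : ℝ), 0 < μ (Set.Icc (-r) r))
    (δ : ℝ) (hδ : 0 ≤ δ) :
    sInf {s : ℝ | ∃ F : ℂ → ℂ, Differentiable ℂ F ∧ F ≠ 0 ∧ ExpTypeLE F δ ∧
      (∀ x : ℝ, (F x).im = 0) ∧
      Integrable (fun x : ℝ => (F x).re) μ ∧
      (∫ x, (F x).re ∂μ) ≤ 0 ∧
      (∃ R : ℝ, ∀ x : ℝ, R ≤ |x| → 0 ≤ (F x).re) ∧
      s = lastSignChange (fun x : ℝ => (F x).re)} = 0 := by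
  have hlb : ∀ s ∈ {s : ℝ | ∃ F : ℂ → ℂ, Differentiable ℂ F ∧ F ≠ 0 ∧ ExpTypeLE F δ ∧
      (∀ x : ℝ, (F x).im = 0) ∧
      Integrable (fun x : ℝ => (F x).re) μ ∧
      (∫ x, (F x).re ∂μ) ≤ 0 ∧
      (∃ R : ℝ, ∀ x : ℝ, R ≤ |x| → 0 ≤ (F x).re) ∧
      s = lastSignChange (fun x : ℝ => (F x).re)}, 0 ≤ s := by
    rintro s ⟨F, -, -, -, -, -, -, -, rfl⟩
    exact lastSignChange_nonneg _
  refine le_antisymm ?_ (Real.sInf_nonneg hlb)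
  refine le_of_forall_pos_le_add fun ε hε => ?_
  obtain ⟨F, h1, h2, h3, h4, h5, h6, h7, h8⟩ := key μ hsupp hmass δ hδ ε hε
  have hmem : lastSignChange (fun x : ℝ => (F x).re) ∈ {s : ℝ | ∃ F : ℂ → ℂ,
      Differentiable ℂ F ∧ F ≠ 0 ∧ ExpTypeLE F δ ∧
      (∀ x : ℝ, (F x).im = 0) ∧
      Integrable (fun x : ℝ => (F x).re) μ ∧
      (∫ x, (F x).re ∂μ) ≤ 0 ∧
      (∃ R : ℝ, ∀ x : ℝ, R ≤ |x| → 0 ≤ (F x).re) ∧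
      s = lastSignChange (fun x : ℝ => (F x).re)} :=
    ⟨F, h1, h2, h3, h4, h5, h6, h7, rfl⟩
  have := csInf_le ⟨0, hlb⟩ hmem
  linarith
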